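/- Let f(x,y,z₁,…,z_n) be a multilinear map into a vector space over a field, symmetric in x and y, such that the full symmetrization of f over each of the triples {x,y,z_i} (for every i = 1,…,n) vanishes (i.e., the cyclic sum over any triple consisting of x, y, and one z_i is zero). Then the span of { f^σ : σ a permutation of the variables } is already spanned by those f^σ with σ(x) = x. -/

import Mathlib

/-- If a multilinear map `f(x, y, z₁, …, z_n)` is symmetric in
`x, y` (positions 0 and 1) and the cyclic sum of `f` over each triple
`{x, y, zᵢ}` vanishes, then every permuted copy `f^σ` lies in the span of
the permuted copies `f^τ` with `τ` fixing the variable `x` (position 0). -/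
theorem stmt17 {F : Type*} [Field F] {V W : Type*}
    [AddCommGroup V] [Module F V] [AddCommGroup W] [Module F W]
    (n : ℕ) (f : MultilinearMap F (fun _ : Fin (n + 2) => V) W)
    (hsym : ∀ v : Fin (n + 2) → V, f (fun j => v (Equiv.swap 0 1 j)) = f v)
    (hcyc : ∀ i : Fin (n + 2), 1 < i → ∀ v : Fin (n + 2) → V,
      f v + f (fun j => v ((Equiv.swap 0 1).trans (Equiv.swap 1 i) j))
        + f (fun j => v (((Equiv.swap 0 1).trans (Equiv.swap 1 i)).trans
            ((Equiv.swap 0 1).trans (Equiv.swap 1 i)) j)) = 0) :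
    ∀ σ : Equiv.Perm (Fin (n + 2)),
      (fun v : Fin (n + 2) → V => f (fun j => v (σ j))) ∈
        Submodule.span F {g : (Fin (n + 2) → V) → W |
          ∃ τ : Equiv.Perm (Fin (n + 2)), τ 0 = 0 ∧
            g = fun v => f (fun j => v (τ j))} := by
  intro σ
  by_cases h0 : σ 0 = 0
  · exact Submodule.subset_span ⟨σ, h0, rfl⟩
  by_cases h1 : σ 1 = 0
  · have hτ : ((Equiv.swap 0 1).trans σ) 0 = 0 := by
      simp [Equiv.trans_apply, h1]
    have heq : (fun v : Fin (n + 2) → V => f (fun j => v (σ j)))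
        = fun v => f (fun j => v (((Equiv.swap 0 1).trans σ) j)) := by
      funext v
      have := hsym (fun j => v (σ j))
      simp only [Equiv.trans_apply]
      exact this.symm
    rw [heq]
    exact Submodule.subset_span ⟨(Equiv.swap 0 1).trans σ, hτ, rfl⟩
  · -- main case
    set i : Fin (n + 2) := σ.symm 0 with hi
    have hσi : σ i = 0 := by simp [hi]
    have hi0 : i ≠ 0 := fun h => h0 (h ▸ hσi)
    have hi1 : i ≠ 1 := fun h => h1 (h ▸ hσi)
    have h01 : (0 : Fin (n + 2)) ≠ 1 := by simp [Fin.ext_iff]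
    have hilt : (1 : Fin (n + 2)) < i := by
      have v0 : (i : Fin (n + 2)).val ≠ 0 := by
        intro h; apply hi0; exact Fin.ext (by simp [h])
      have v1 : (i : Fin (n + 2)).val ≠ 1 := by
        simpa [Fin.ext_iff] using hi1
      have : (1 : Fin (n + 2)).val = 1 := rfl
      rw [Fin.lt_iff_val_lt_val, this]
      omega
    set c : Equiv.Perm (Fin (n + 2)) := (Equiv.swap 0 1).trans (Equiv.swap 1 i) with hc
    have hc0 : c 0 = i := by
      simp [hc, Equiv.trans_apply]
    have hc1 : c 1 = 0 := by
      have : (Equiv.swap (0 : Fin (n+2)) 1) 1 = 0 := Equiv.swap_apply_right 0 1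
      rw [hc, Equiv.trans_apply, this,
        Equiv.swap_apply_of_ne_of_ne h01 (Ne.symm hi0)]
    have hci : c i = 1 := by
      rw [hc, Equiv.trans_apply,
        Equiv.swap_apply_of_ne_of_ne hi0 hi1, Equiv.swap_apply_right]
    set τ₁ : Equiv.Perm (Fin (n + 2)) := c.trans σ with hτ₁
    set τ₂ : Equiv.Perm (Fin (n + 2)) := ((Equiv.swap 0 1).trans (c.trans c)).trans σ with hτ₂
    have hτ₁0 : τ₁ 0 = 0 := by
      simp [hτ₁, Equiv.trans_apply, hc0, hi]
    have hτ₂0 : τ₂ 0 = 0 := by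
      simp [hτ₂, Equiv.trans_apply, hc1, hc0, hi]
    have h1mem : (fun v : Fin (n + 2) → V => f (fun j => v (τ₁ j))) ∈
        Submodule.span F {g : (Fin (n + 2) → V) → W |
          ∃ τ : Equiv.Perm (Fin (n + 2)), τ 0 = 0 ∧
            g = fun v => f (fun j => v (τ j))} :=
      Submodule.subset_span ⟨τ₁, hτ₁0, rfl⟩
    have h2mem : (fun v : Fin (n + 2) → V => f (fun j => v (τ₂ j))) ∈
        Submodule.span F {g : (Fin (n + 2) → V) → W |
          ∃ τ : Equiv.Perm (Fin (n + 2)), τ 0 = 0 ∧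
            g = fun v => f (fun j => v (τ j))} :=
      Submodule.subset_span ⟨τ₂, hτ₂0, rfl⟩
    have key : (fun v : Fin (n + 2) → V => f (fun j => v (σ j)))
        = -(fun v : Fin (n + 2) → V => f (fun j => v (τ₁ j)))
          - (fun v : Fin (n + 2) → V => f (fun j => v (τ₂ j))) := by
      funext v
      have hcy := hcyc i hilt (fun j => v (σ j))
      have hs := hsym (fun j => v (σ (c (c j))))
      simp only [Pi.sub_apply, Pi.neg_apply]
      have e1 : f (fun j => v (τ₁ j)) = f (fun j => v (σ (c j))) := by
        simp [hτ₁, Equiv.trans_apply]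
      have e2 : f (fun j => v (τ₂ j)) = f (fun j => v (σ (c (c j)))) := by
        have : (fun j => v (τ₂ j)) =
            fun j => (fun j' => v (σ (c (c j')))) (Equiv.swap 0 1 j) := by
          funext j
          simp [hτ₂, Equiv.trans_apply]
        rw [this, hs]
      rw [e1, e2]
      have hcy' : f (fun j => v (σ j)) +
          (f (fun j => v (σ (c j))) + f (fun j => v (σ (c (c j))))) = 0 := by
        rw [← add_assoc]
        convert hcy using 3
        rfl
      have := eq_neg_of_add_eq_zero_left hcy'
      rw [this, neg_add]
      abel
    rw [key]
    exact sub_mem (neg_mem h1mem) h2mem
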